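/- Let A be a finite-dimensional Hopf algebra and L a left normal coideal subalgebra with idempotent integral Λ_L (the unique element of L with ε(Λ_L)=1 and l Λ_L = ε(l) Λ_L for all l ∈ L). Then Λ_L ⇀ A* = (A//L)*, where (A//L)* = {f ∈ A* : f(al) = ε(l) f(a) for all a ∈ A, l ∈ L} and (Λ_L ⇀ f)(a) = f(a Λ_L). -/

import Mathlib

open scoped TensorProduct
open Coalgebra

noncomputable section
namespace Burciu

variable (k : Type*) [Field k] (A : Type*) [Ring A] [HopfAlgebra k A]

/-- The left adjoint action, `adL (a ⊗ l) = a₁ * l * S(a₂)`. -/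
def adL : A ⊗[k] A →ₗ[k] A :=
  (LinearMap.mul' k A) ∘ₗ
  (LinearMap.lTensor A (LinearMap.mul' k A)) ∘ₗ
  (LinearMap.lTensor A (LinearMap.lTensor A (HopfAlgebra.antipode (R := k)))) ∘ₗ
  (LinearMap.lTensor A (TensorProduct.comm k A A).toLinearMap) ∘ₗ
  (TensorProduct.assoc k A A A).toLinearMap ∘ₗ
  (LinearMap.rTensor A (Coalgebra.comul (R := k)))

/-- The right adjoint action, `adR (a ⊗ l) = S(a₁) * l * a₂`. -/
def adR : A ⊗[k] A →ₗ[k] A :=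
  (LinearMap.mul' k A) ∘ₗ
  (LinearMap.rTensor A (LinearMap.mul' k A)) ∘ₗ
  (TensorProduct.assoc k A A A).symm.toLinearMap ∘ₗ
  (LinearMap.rTensor (A ⊗[k] A) (HopfAlgebra.antipode (R := k))) ∘ₗ
  (LinearMap.lTensor A (TensorProduct.comm k A A).toLinearMap) ∘ₗ
  (TensorProduct.assoc k A A A).toLinearMap ∘ₗ
  (LinearMap.rTensor A (Coalgebra.comul (R := k)))

variable {k A} in
/-- `L` is a left coideal subalgebra: `Δ(L) ⊆ A ⊗ L`. -/
def IsLeftCoideal (L : Subalgebra k A) : Prop :=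
  ∀ l ∈ L, Coalgebra.comul (R := k) l ∈
    LinearMap.range (LinearMap.lTensor A (Subalgebra.toSubmodule L).subtype)

variable {k A} in
/-- `L` is a left normal coideal subalgebra: a left coideal subalgebra closed
under the left adjoint action `a · l = a₁ l S(a₂)`. -/
def IsLNCS (L : Subalgebra k A) : Prop :=
  IsLeftCoideal L ∧ ∀ a : A, ∀ l ∈ L, adL k A (a ⊗ₜ[k] l) ∈ L

variable {k A} in
/-- `L` is a Hopf subalgebra: a subalgebra with `Δ(L) ⊆ L ⊗ L` and `S(L) ⊆ L`. -/
def IsHopfSubalgebra (L : Subalgebra k A) : Prop :=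
  (∀ l ∈ L, Coalgebra.comul (R := k) l ∈
    LinearMap.range (TensorProduct.map (Subalgebra.toSubmodule L).subtype
      (Subalgebra.toSubmodule L).subtype)) ∧
  ∀ l ∈ L, HopfAlgebra.antipode (R := k) l ∈ L

variable {k A} in
/-- `L` is a normal Hopf subalgebra: a Hopf subalgebra stable under both
adjoint actions. -/
def IsNormalHopfSubalgebra (L : Subalgebra k A) : Prop :=
  IsHopfSubalgebra L ∧ (∀ a : A, ∀ l ∈ L, adL k A (a ⊗ₜ[k] l) ∈ L) ∧
    (∀ a : A, ∀ l ∈ L, adR k A (a ⊗ₜ[k] l) ∈ L)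

/-- The augmentation ideal `A L⁺`, where `L⁺ = L ∩ ker ε`. -/
def ALplus (L : Subalgebra k A) : Submodule k A :=
  (⊤ : Submodule k A) *
    (Subalgebra.toSubmodule L ⊓ LinearMap.ker (Coalgebra.counit (R := k) (A := A)))

/-- The right hit action `a ↼ f = f(a₁) a₂`, as a linear endomorphism of `A`. -/
def hit (f : Module.Dual k A) : A →ₗ[k] A :=
  (TensorProduct.lid k A).toLinearMap ∘ₗ (LinearMap.rTensor A f) ∘ₗ (Coalgebra.comul (R := k))

/-- Convolution product on the dual `A*`. -/
def conv (f g : Module.Dual k A) : Module.Dual k A :=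
  (LinearMap.mul' k k) ∘ₗ (TensorProduct.map f g) ∘ₗ (Coalgebra.comul (R := k))

variable {k A} in
/-- The cocommutative elements of `A*`; for a semisimple Hopf algebra these are
exactly the span of the irreducible characters, i.e. the character ring `C(A)`. -/
def IsCocom (f : Module.Dual k A) : Prop := ∀ a b : A, f (a * b) = f (b * a)

variable {k A} in
/-- The Hopf subalgebra `(A//N)* = {f ∈ A* | f(al) = ε(l) f(a) ∀ a ∈ A, l ∈ N} ⊆ A*`
attached to a subspace `N ⊆ A`. -/
def dualQuot (N : Submodule k A) : Set (Module.Dual k A) :=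
  {f | ∀ a : A, ∀ l ∈ N, f (a * l) = Coalgebra.counit (R := k) l * f a}

/-- The axioms for an R-matrix making `(A, R)` quasitriangular. -/
structure IsRMatrix (R : A ⊗[k] A) : Prop where
  isUnit : IsUnit R
  quasi : ∀ x : A, R * (Coalgebra.comul (R := k) x) =
    (TensorProduct.comm k A A (Coalgebra.comul (R := k) x)) * R
  comul_left : LinearMap.rTensor A (Coalgebra.comul (R := k)) R =
    (LinearMap.rTensor A ((TensorProduct.mk k A A).flip 1) R) *
      (LinearMap.rTensor A (TensorProduct.mk k A A 1) R)
  comul_right : LinearMap.lTensor A (Coalgebra.comul (R := k)) R =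
    (LinearMap.lTensor A (TensorProduct.mk k A A 1) R) *
      (LinearMap.lTensor A ((TensorProduct.mk k A A).flip 1) R)
  counit_left : (TensorProduct.lid k A) (LinearMap.rTensor A (Coalgebra.counit (R := k)) R) = 1
  counit_right : (TensorProduct.rid k A) (LinearMap.lTensor A (Coalgebra.counit (R := k)) R) = 1

/-- The monodromy matrix `Q = R₂₁ R`. -/
def Qmat (R : A ⊗[k] A) : A ⊗[k] A := (TensorProduct.comm k A A R) * R

/-- The Drinfeld map `φ_R(f) = (f ⊗ id)(R₂₁ R)`. -/
def phiR (R : A ⊗[k] A) (f : Module.Dual k A) : A :=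
  (TensorProduct.lid k A) (LinearMap.rTensor A f (Qmat k A R))

/-- The second Drinfeld map `_Rφ(f) = (id ⊗ f)(R₂₁ R)`. -/
def phiR' (R : A ⊗[k] A) (f : Module.Dual k A) : A :=
  (TensorProduct.rid k A) (LinearMap.lTensor A f (Qmat k A R))

variable {k A} in
/-- The monodromy `c_{W,V} ∘ c_{V,W}`, i.e. the action of `Q = R₂₁R`, is the
identity on `V ⊗ W`: the two representations centralize each other. -/
def QactsTrivially {V W : Type*} [AddCommGroup V] [Module k V] [AddCommGroup W] [Module k W]
    (R : A ⊗[k] A) (ρ : A →ₐ[k] Module.End k V) (σ : A →ₐ[k] Module.End k W) : Prop :=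
  (TensorProduct.homTensorHomMap (RingHom.id k) V W V W)
    (TensorProduct.map ρ.toLinearMap σ.toLinearMap (Qmat k A R)) = LinearMap.id

variable {k A} in
/-- A subset of `A` acts through the counit in a representation; for a left
normal coideal subalgebra `L` this says the module lies in `Rep(A//L)`. -/
def ActsTriviallyOn {V : Type*} [AddCommGroup V] [Module k V]
    (ρ : A →ₐ[k] Module.End k V) (L : Set A) : Prop :=
  ∀ l ∈ L, ρ l = (Coalgebra.counit (R := k) l) • (1 : Module.End k V)

variable {k A} in
/-- The character of a finite-dimensional representation. -/
def char {V : Type*} [AddCommGroup V] [Module k V]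
    (ρ : A →ₐ[k] Module.End k V) : Module.Dual k A :=
  (LinearMap.trace k V) ∘ₗ ρ.toLinearMap

end Burciu
end

open Burciu
open scoped TensorProduct
/-- If `Λ_L` is the idempotent integral of a left normal
coideal subalgebra `L` of a finite-dimensional Hopf algebra `A`, then
`Λ_L ⇀ A* = (A//L)*`, where `(Λ_L ⇀ f)(a) = f(a Λ_L)`. -/
theorem hit_integral_range_eq_dualQuot
    {k : Type*} [Field k] {A : Type*} [Ring A] [HopfAlgebra k A] [FiniteDimensional k A]
    (L : Subalgebra k A) (hL : IsLNCS L) (Λ : A) (hmem : Λ ∈ L)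
    (hcounit : Coalgebra.counit (R := k) Λ = 1)
    (hint : ∀ l ∈ L, l * Λ = Coalgebra.counit (R := k) l • Λ) :
    Set.range (fun f : Module.Dual k A => f ∘ₗ LinearMap.mulRight k Λ) =
      dualQuot (Subalgebra.toSubmodule L) := by
  ext f
  constructor
  · rintro ⟨g, rfl⟩
    intro a l hl
    simp only [LinearMap.comp_apply, LinearMap.mulRight_apply, mul_assoc, hint l hl,
      Algebra.mul_smul_comm, map_smul, smul_eq_mul]
  · intro hf
    refine ⟨f, ?_⟩
    ext a
    simpa [hcounit] using hf a Λ hmem
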